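/- Let f : U → ℂ be holomorphic with f(0) = 0, let b_k denote the k-th Taylor coefficient of f at 0, and let u ∈ ℝ. Then for every k ≥ 1, the k-th Taylor coefficient at 0 of the function ζ ↦ ζ · f'(ζ) · (e^{iu}+ζ)/(e^{iu}−ζ) equals k·b_k + 2∑_{j=1}^{k−1} j·b_j·e^{−i(k−j)u}. (Consequently, the Taylor coefficients of a subordination chain f(ζ,t) satisfying the Löwner partial differential equation ∂f/∂t = ζ·∂f/∂ζ·(e^{iu(t)}+ζ)/(e^{iu(t)}−ζ) satisfy ḃ_k = k b_k + 2∑_{j=1}^{k−1} j b_j e^{−i(k−j)u(t)}.) -/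

import Mathlib

open Complex Metric

/-- The `k`-th Taylor coefficient of `f` at `0`. -/
noncomputable def taylorCoeff (f : ℂ → ℂ) (k : ℕ) : ℂ :=
  iteratedDeriv k f 0 / Nat.factorial k

/-- The Löwner kernel `p(ζ, u) = (e^{iu} + ζ)/(e^{iu} - ζ)`. -/
noncomputable def lkernel (ζ : ℂ) (u : ℝ) : ℂ :=
  (Complex.exp (u * Complex.I) + ζ) / (Complex.exp (u * Complex.I) - ζ)

/-- Auxiliary coefficient sequence for the kernel. -/
noncomputable def dcoef (u : ℝ) (n : ℕ) : ℂ :=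
  if n = 0 then 1 else 2 * Complex.exp (-(n : ℂ) * u * Complex.I)

lemma norm_dcoef_le (u : ℝ) (n : ℕ) : ‖dcoef u n‖ ≤ 2 := by
  rcases Nat.eq_zero_or_pos n with h | h
  · simp [dcoef, h]
  · have hn : n ≠ 0 := h.ne'
    have : (-(n : ℂ) * u * Complex.I) = ((-(n * u) : ℝ) : ℂ) * Complex.I := by
      push_cast; ring
    simp only [dcoef, if_neg hn, this]
    rw [norm_mul, Complex.norm_exp_ofReal_mul_I]
    norm_num

lemma kernel_hasSum (u : ℝ) (ζ : ℂ) (hζ : ‖ζ‖ < 1) :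
    HasSum (fun n => dcoef u n * ζ ^ n) (lkernel ζ u) := by
  set e : ℂ := Complex.exp (u * Complex.I) with he_def
  have habs : ‖e‖ = 1 := Complex.norm_exp_ofReal_mul_I u
  have hee : e ≠ 0 := Complex.exp_ne_zero _
  have hsub : e - ζ ≠ 0 := by
    intro h
    have : e = ζ := by linear_combination h
    rw [this] at habs
    rw [habs] at hζ
    exact lt_irrefl 1 hζ
  have hx : ‖ζ * e⁻¹‖ < 1 := by
    rw [norm_mul, norm_inv, habs]
    simpa using hζ
  have h1 : HasSum (fun n : ℕ => 2 * (ζ * e⁻¹) ^ n) (2 * (1 - ζ * e⁻¹)⁻¹) :=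
    (hasSum_geometric_of_norm_lt_one hx).mul_left 2
  have h2 : HasSum (fun n : ℕ => if n = 0 then (1 : ℂ) else 0) 1 := by
    simpa using hasSum_ite_eq (0 : ℕ) (1 : ℂ)
  have h3 := h1.sub h2
  have hterm : (fun n : ℕ => 2 * (ζ * e⁻¹) ^ n - if n = 0 then (1 : ℂ) else 0)
      = fun n => dcoef u n * ζ ^ n := by
    funext n
    rcases Nat.eq_zero_or_pos n with h | h
    · simp [h, dcoef]; norm_num
    · have hn : n ≠ 0 := h.ne'
      have hinv : e⁻¹ ^ n = Complex.exp (-(n : ℂ) * u * Complex.I) := by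
        rw [he_def, ← Complex.exp_neg, ← Complex.exp_nat_mul]
        congr 1; ring
      simp only [dcoef, if_neg hn, mul_pow, hinv]
      ring
  have htarget : 2 * (1 - ζ * e⁻¹)⁻¹ - 1 = lkernel ζ u := by
    rw [lkernel, ← he_def]
    have h1e : (1 : ℂ) - ζ * e⁻¹ = (e - ζ) * e⁻¹ := by
      field_simp
    rw [h1e, mul_inv, inv_inv]
    field_simp
    ring
  rw [hterm, htarget] at h3
  exact h3

lemma deriv_hasSum {f : ℂ → ℂ} {p : FormalMultilinearSeries ℂ ℂ ℂ} {R : ENNReal}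
    (hp : HasFPowerSeriesOnBall f p 0 R) (ζ : ℂ) (hζ : (‖ζ‖₊ : ENNReal) < R) :
    HasSum (fun n : ℕ => (n : ℂ) * p.coeff n * ζ ^ n) (ζ * deriv f ζ) ∧
      Summable (fun n : ℕ => ‖(n : ℂ) * p.coeff n * ζ ^ n‖) := by
  have hmem : ζ ∈ Metric.eball (0 : ℂ) R := by
    simpa [Metric.mem_eball, edist_zero_right, enorm_eq_nnnorm] using hζ
  have hd := hp.fderiv.hasSum hmem
  rw [zero_add] at hd
  have hd2 := (ContinuousLinearMap.apply ℂ ℂ ζ).hasSum hd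
  have hterm : ∀ n : ℕ, (ContinuousLinearMap.apply ℂ ℂ ζ) (p.derivSeries n (fun _ => ζ))
      = (((n : ℕ) : ℂ) + 1) * p.coeff (n + 1) * ζ ^ (n + 1) := by
    intro n
    have := p.derivSeries_apply_diag n ζ
    simp only [ContinuousLinearMap.apply_apply]
    rw [this, FormalMultilinearSeries.apply_eq_pow_smul_coeff, smul_eq_mul, nsmul_eq_mul]
    push_cast
    ring
  have htgt : (ContinuousLinearMap.apply ℂ ℂ ζ) (fderiv ℂ f ζ) = ζ * deriv f ζ := by
    have h1 : fderiv ℂ f ζ ζ = fderiv ℂ f ζ (ζ • 1) := by rw [smul_eq_mul, mul_one]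
    simp only [ContinuousLinearMap.apply_apply]
    rw [h1, ContinuousLinearMap.map_smul, fderiv_apply_one_eq_deriv, smul_eq_mul]
  rw [htgt] at hd2
  have hd3 : HasSum (fun n : ℕ => (((n : ℕ) : ℂ) + 1) * p.coeff (n + 1) * ζ ^ (n + 1))
      (ζ * deriv f ζ) := by
    convert hd2 using 1
    · rfl
    funext n
    exact (hterm n).symm
  constructor
  · apply (hasSum_nat_add_iff' 1).mp
    simpa using hd3
  · have hmem' : ζ ∈ Metric.eball (0 : ℂ) p.derivSeries.radius := by
      rw [Metric.mem_eball, edist_zero_right, enorm_eq_nnnorm]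
      exact lt_of_lt_of_le hζ (hp.r_le.trans p.radius_le_radius_derivSeries)
    have hs := p.derivSeries.summable_norm_apply (x := ζ) hmem'
    have hs2 : Summable (fun n => ‖p.derivSeries n (fun _ => ζ)‖ * ‖ζ‖) := hs.mul_right _
    have hs3 : Summable (fun n : ℕ => ‖(((n : ℕ) : ℂ) + 1) * p.coeff (n + 1) * ζ ^ (n + 1)‖) := by
      refine hs2.of_nonneg_of_le (fun n => norm_nonneg _) (fun n => ?_)
      rw [← hterm n]
      simpa using (p.derivSeries n (fun _ => ζ)).le_opNorm ζ
    apply (summable_nat_add_iff 1).mp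
    convert hs3 using 2 with n
    · rfl
    push_cast
    ring_nf

/-- for `f` holomorphic on the unit disk with `f(0) = 0` and Taylor
coefficients `b_k`, the `k`-th Taylor coefficient of `ζ·f'(ζ)·(e^{iu}+ζ)/(e^{iu}-ζ)`
equals `k·b_k + 2∑_{j=1}^{k-1} j·b_j·e^{-i(k-j)u}`. -/
theorem taylorCoeff_loewner_pde_rhs
    (f : ℂ → ℂ) (hf : DifferentiableOn ℂ f (ball (0 : ℂ) 1)) (hf0 : f 0 = 0)
    (b : ℕ → ℂ) (hb : ∀ k, b k = taylorCoeff f k) (u : ℝ) :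
    ∀ k : ℕ, 1 ≤ k →
      taylorCoeff (fun ζ => ζ * deriv f ζ * lkernel ζ u) k
        = (k : ℂ) * b k + 2 * ∑ j ∈ Finset.Icc 1 (k - 1),
            (j : ℂ) * b j * Complex.exp (-((k : ℂ) - (j : ℂ)) * (u : ℂ) * Complex.I) := by
  intro k hk
  -- power series for f on the ball of radius 1/2
  have hf' : DifferentiableOn ℂ f (closedBall (0 : ℂ) ((1/2 : NNReal) : ℝ)) := by
    refine hf.mono (closedBall_subset_ball ?_)
    norm_num
  have hp := hf'.hasFPowerSeriesOnBall (R := 1/2) (by norm_num)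
  set p := cauchyPowerSeries f 0 ((1/2 : NNReal) : ℝ) with hp_def
  -- coefficients of p are the b k
  have hpb : ∀ n, p.coeff n = b n := by
    intro n
    have h1 := hp.factorial_smul (1 : ℂ) n
    rw [← iteratedDeriv_eq_iteratedFDeriv] at h1
    have h2 : (n.factorial : ℂ) * p.coeff n = iteratedDeriv n f 0 := by
      rw [← h1, nsmul_eq_mul]
      rfl
    rw [hb n, taylorCoeff, ← h2]
    have hfac : (n.factorial : ℂ) ≠ 0 := by
      exact_mod_cast n.factorial_ne_zero
    field_simp
  set c : ℕ → ℂ := fun m => ∑ i ∈ Finset.range (m + 1), (i : ℂ) * b i * dcoef u (m - i)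
    with hc_def
  -- key : power series expansion of the product near 0
  have key : ∀ ζ : ℂ, ‖ζ‖ < 1/2 →
      HasSum (fun m => c m * ζ ^ m) (ζ * deriv f ζ * lkernel ζ u) ∧
        Summable (fun m => ‖c m * ζ ^ m‖) := by
    intro ζ hζ
    have hζ' : (‖ζ‖₊ : ENNReal) < ((1/2 : NNReal) : ENNReal) := by
      rw [ENNReal.coe_lt_coe, ← NNReal.coe_lt_coe, coe_nnnorm]
      simpa using hζ
    obtain ⟨hA, hAs⟩ := deriv_hasSum hp ζ hζ'
    simp only [hpb] at hA hAs
    have hD := kernel_hasSum u ζ (hζ.trans (by norm_num))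
    have hDs : Summable (fun n => ‖dcoef u n * ζ ^ n‖) := by
      have hgeo : Summable (fun n : ℕ => 2 * ‖ζ‖ ^ n) :=
        (summable_geometric_of_lt_one (norm_nonneg ζ) (by linarith)).mul_left 2
      refine hgeo.of_nonneg_of_le (fun n => norm_nonneg _) (fun n => ?_)
      rw [norm_mul, norm_pow]
      exact mul_le_mul_of_nonneg_right (norm_dcoef_le u n)
        (pow_nonneg (norm_nonneg ζ) n)
    have hmul := hasSum_sum_range_mul_of_summable_norm hAs hDs
    rw [hA.tsum_eq, hD.tsum_eq] at hmul
    have hsum_eq : ∀ m, (∑ i ∈ Finset.range (m + 1),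
        ((i : ℂ) * b i * ζ ^ i) * (dcoef u (m - i) * ζ ^ (m - i))) = c m * ζ ^ m := by
      intro m
      show _ = (∑ i ∈ Finset.range (m + 1), (i : ℂ) * b i * dcoef u (m - i)) * ζ ^ m
      rw [Finset.sum_mul]
      refine Finset.sum_congr rfl (fun i hi => ?_)
      have hi' : i ≤ m := Nat.lt_succ_iff.mp (Finset.mem_range.mp hi)
      have hpow : ζ ^ i * ζ ^ (m - i) = ζ ^ m := by
        rw [← pow_add, Nat.add_sub_cancel' hi']
      calc ((i : ℂ) * b i * ζ ^ i) * (dcoef u (m - i) * ζ ^ (m - i))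
          = ((i : ℂ) * b i * dcoef u (m - i)) * (ζ ^ i * ζ ^ (m - i)) := by ring
        _ = (i : ℂ) * b i * dcoef u (m - i) * ζ ^ m := by rw [hpow]
    constructor
    · convert hmul using 1
      · rfl
      funext m
      exact (hsum_eq m).symm
    · have := summable_norm_sum_mul_range_of_summable_norm hAs hDs
      convert this using 2 with m
      rw [hsum_eq m]
  -- the product has the power series `ofScalars c` on the ball of radius 1/4
  have hball : HasFPowerSeriesOnBall (fun ζ => ζ * deriv f ζ * lkernel ζ u)
      (FormalMultilinearSeries.ofScalars ℂ c) 0 ((1/4 : NNReal) : ENNReal) := by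
    constructor
    · apply FormalMultilinearSeries.le_radius_of_summable_norm
      have h14 : ‖(((1:ℝ)/4 : ℝ) : ℂ)‖ < 1/2 := by
        rw [Complex.norm_real]
        norm_num
      have := (key (((1:ℝ)/4 : ℝ) : ℂ) h14).2
      have heq : ∀ n : ℕ, ‖c n * (((1:ℝ)/4 : ℝ) : ℂ) ^ n‖
          = ‖FormalMultilinearSeries.ofScalars ℂ c n‖ * ((1/4 : NNReal) : ℝ) ^ n := by
        intro n
        rw [norm_mul, norm_pow, FormalMultilinearSeries.ofScalars_norm, Complex.norm_real]
        norm_num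
      exact Summable.congr this heq
    · norm_num
    · intro y hy
      have hy' : ‖y‖ < 1/2 := by
        rw [EMetric.mem_ball, edist_zero_right, enorm_eq_nnnorm, ENNReal.coe_lt_coe,
          ← NNReal.coe_lt_coe, coe_nnnorm] at hy
        have h4 : ((1/4 : NNReal) : ℝ) = 1/4 := by norm_num
        rw [h4] at hy
        linarith
      have := (key y hy').1
      simp only [zero_add]
      convert this using 1
      · rfl
      funext n
      rw [FormalMultilinearSeries.ofScalars_apply_eq, smul_eq_mul]
  -- extract the Taylor coefficient
  have hc : taylorCoeff (fun ζ => ζ * deriv f ζ * lkernel ζ u) k = c k := by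
    have h1 := hball.factorial_smul (1 : ℂ) k
    rw [← iteratedDeriv_eq_iteratedFDeriv] at h1
    have h2 : (FormalMultilinearSeries.ofScalars ℂ c k) (fun _ => (1 : ℂ)) = c k := by
      rw [FormalMultilinearSeries.ofScalars_apply_eq]
      simp
    rw [h2] at h1
    rw [taylorCoeff, ← h1, nsmul_eq_mul]
    have hfac : (k.factorial : ℂ) ≠ 0 := by exact_mod_cast k.factorial_ne_zero
    field_simp
  rw [hc]
  -- compute c k
  have hkpos : 0 < k := hk
  show (∑ i ∈ Finset.range (k + 1), (i : ℂ) * b i * dcoef u (k - i)) = _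
  rw [Finset.sum_range_succ]
  have hd0 : dcoef u (k - k) = 1 := by simp [dcoef]
  rw [hd0, mul_one]
  have hrange : Finset.range k = Finset.Ico 0 k := by rw [Finset.range_eq_Ico]
  rw [hrange, Finset.sum_eq_sum_Ico_succ_bot hkpos]
  have hIcc : Finset.Ico 1 k = Finset.Icc 1 (k - 1) := by
    rw [← Finset.Ico_add_one_right_eq_Icc]
    congr 1
    omega
  rw [hIcc]
  simp only [Nat.cast_zero, zero_mul, zero_add]
  rw [Finset.mul_sum]
  rw [add_comm ((k:ℂ) * b k)]
  congr 1
  refine Finset.sum_congr rfl (fun j hj => ?_)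
  obtain ⟨hj1, hj2⟩ := Finset.mem_Icc.mp hj
  have hjk : j < k := by omega
  have hne : k - j ≠ 0 := by omega
  rw [dcoef, if_neg hne]
  have hcast : ((k - j : ℕ) : ℂ) = (k : ℂ) - (j : ℂ) := by
    push_cast [Nat.cast_sub hjk.le]
    ring
  rw [hcast]
  ring
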